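/- Let X and X' be extended quasi-metric spaces such that in each space the infimum of the distances d(a,b) over pairs of distinct points a ≠ b is strictly positive. If the magnitude cohomology rings MH^*_*(X) and MH^*_*(X') are isomorphic as bigraded associative unital rings (an isomorphism respecting both the cohomological grading k ∈ ℕ and the length grading ℓ ∈ [0,∞)), then X and X' are isometric, i.e. there is a bijection f : X → X' with d'(f(a),f(b)) = d(a,b) for all a,b ∈ X. -/

import Mathlib

/-! Core definitions: magnitude (co)homology of generalised metric spaces. -/

open scoped ENNReal NNReal Classical
noncomputable section

/-- A generalised metric space (extended pseudo-quasi-metric space):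
a set with a distance in `[0,∞]` satisfying `d x x = 0` and the triangle
inequality, but not necessarily symmetry or separation. -/
structure GMS (X : Type*) where
  d : X → X → ℝ≥0∞
  d_self : ∀ x, d x x = 0
  d_triangle : ∀ x y z, d x z ≤ d x y + d y z

variable {X : Type*}

/-- An extended quasi-metric space: distinct points are at nonzero distance. -/
def GMS.Quasi (M : GMS X) : Prop := ∀ x y, M.d x y = 0 → x = y

/-- Consecutive entries of the tuple are distinct, i.e. it is a simplex. -/
def SepTuple {k : ℕ} (x : Fin (k + 1) → X) : Prop :=
  ∀ i : Fin k, x i.castSucc ≠ x i.succ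

/-- The length of a tuple: the sum of consecutive distances. -/
def GMS.len (M : GMS X) {k : ℕ} (x : Fin (k + 1) → X) : ℝ≥0∞ :=
  ∑ i : Fin k, M.d (x i.castSucc) (x i.succ)

/-- A `k`-simplex of length `ℓ` in the generalised metric space `M`. -/
structure MSimplex (M : GMS X) (k : ℕ) (ℓ : ℝ≥0) where
  pts : Fin (k + 1) → X
  sep : SepTuple pts
  len_eq : M.len pts = (ℓ : ℝ≥0∞)

/-- The magnitude chain group `MC_{k,ℓ}`: the free abelian group on the
`k`-simplices of length `ℓ`. -/
abbrev MC (M : GMS X) (k : ℕ) (ℓ : ℝ≥0) := MSimplex M k ℓ →₀ ℤ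

/-- The magnitude cochain group `MC^k_ℓ = Hom(MC_{k,ℓ}, ℤ)`, identified with
the group of all `ℤ`-valued functions on `k`-simplices of length `ℓ`. -/
abbrev MCo (M : GMS X) (k : ℕ) (ℓ : ℝ≥0) := MSimplex M k ℓ → ℤ

/-- Remove the `(j+1)`-st point (an inner point) from a tuple. -/
def faceTuple {k : ℕ} (x : Fin (k + 2) → X) (j : Fin k) : Fin (k + 1) → X :=
  x ∘ Fin.succAbove ⟨j.val + 1, by have := j.isLt; omega⟩

/-- The condition under which the inner face `∂_{j+1}` of a simplex is a simplex
of the same length: the removed point lies on a geodesic between its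
neighbours (and, redundantly in quasi-metric spaces, the face is again a
simplex of the same length). -/
def GMS.FaceOK (M : GMS X) {k : ℕ} {ℓ : ℝ≥0} (s : MSimplex M (k + 1) ℓ) (j : Fin k) : Prop :=
  M.d (s.pts ⟨j.val, by have := j.isLt; omega⟩) (s.pts ⟨j.val + 2, by have := j.isLt; omega⟩) =
      M.d (s.pts ⟨j.val, by have := j.isLt; omega⟩) (s.pts ⟨j.val + 1, by have := j.isLt; omega⟩) +
      M.d (s.pts ⟨j.val + 1, by have := j.isLt; omega⟩) (s.pts ⟨j.val + 2, by have := j.isLt; omega⟩)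
    ∧ SepTuple (faceTuple s.pts j) ∧ M.len (faceTuple s.pts j) = (ℓ : ℝ≥0∞)

/-- The inner face `∂_{j+1}` of a simplex, when defined. -/
def GMS.face (M : GMS X) {k : ℕ} {ℓ : ℝ≥0} (s : MSimplex M (k + 1) ℓ) (j : Fin k)
    (h : M.FaceOK s j) : MSimplex M k ℓ :=
  ⟨faceTuple s.pts j, h.2.1, h.2.2⟩

/-- The magnitude coboundary `∂^* : MC^k_ℓ → MC^{k+1}_ℓ`, dual to the
differential `∂ = -∂_1 + ∂_2 - ⋯ + (-1)^k ∂_k`. -/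
def MCoDelta (M : GMS X) (k : ℕ) (ℓ : ℝ≥0) : MCo M k ℓ →ₗ[ℤ] MCo M (k + 1) ℓ where
  toFun φ := fun s => ∑ j : Fin k, (-1 : ℤ) ^ (j.val + 1) *
      (if h : M.FaceOK s j then φ (M.face s j h) else 0)
  map_add' φ ψ := by
    funext s
    simp only [Pi.add_apply]
    rw [← Finset.sum_add_distrib]
    refine Finset.sum_congr rfl fun j _ => ?_
    split <;> ring
  map_smul' z φ := by
    funext s
    simp only [Pi.smul_apply, smul_eq_mul, RingHom.id_apply]
    rw [Finset.mul_sum]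
    refine Finset.sum_congr rfl fun j _ => ?_
    split <;> ring

/-- Magnitude cocycles in bidegree `(k, ℓ)`. -/
def MCocycle (M : GMS X) (k : ℕ) (ℓ : ℝ≥0) : Submodule ℤ (MCo M k ℓ) :=
  LinearMap.ker (MCoDelta M k ℓ)

/-- Magnitude coboundaries in bidegree `(k, ℓ)` (zero in degree `0`). -/
def MCobound (M : GMS X) : (k : ℕ) → (ℓ : ℝ≥0) → Submodule ℤ (MCo M k ℓ)
  | 0, _ => ⊥
  | (k + 1), ℓ => LinearMap.range (MCoDelta M k ℓ)

/-- The magnitude cohomology group `MH^k_ℓ(X)`: cocycles modulo coboundaries. -/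
abbrev MagCohomology (M : GMS X) (k : ℕ) (ℓ : ℝ≥0) :=
  MCocycle M k ℓ ⧸ (MCobound M k ℓ).comap (MCocycle M k ℓ).subtype

/-- The cohomology class of a cochain (zero if it is not a cocycle). -/
def cohClass (M : GMS X) {k : ℕ} {ℓ : ℝ≥0} (φ : MCo M k ℓ) : MagCohomology M k ℓ :=
  if h : φ ∈ MCocycle M k ℓ then Submodule.Quotient.mk ⟨φ, h⟩ else 0

/-- A representative cocycle of a magnitude cohomology class. -/
def MHout (M : GMS X) {k : ℕ} {ℓ : ℝ≥0} (α : MagCohomology M k ℓ) : MCo M k ℓ :=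
  ((Submodule.Quotient.mk_surjective _) α).choose.val

/-- The first `j+1` points of a `(j+k)`-simplex. -/
def frontT (j k : ℕ) (x : Fin (j + k + 1) → X) : Fin (j + 1) → X :=
  fun i => x ⟨i.val, by have := i.isLt; omega⟩

/-- The last `k+1` points of a `(j+k)`-simplex. -/
def backT (j k : ℕ) (x : Fin (j + k + 1) → X) : Fin (k + 1) → X :=
  fun i => x ⟨j + i.val, by have := i.isLt; omega⟩

lemma SepTuple.front {j k : ℕ} {x : Fin (j + k + 1) → X} (h : SepTuple x) :
    SepTuple (frontT j k x) := by
  intro i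
  have hi := i.isLt
  exact h ⟨i.val, by omega⟩

lemma SepTuple.back {j k : ℕ} {x : Fin (j + k + 1) → X} (h : SepTuple x) :
    SepTuple (backT j k x) := by
  intro i
  have hi := i.isLt
  exact h ⟨j + i.val, by omega⟩

/-- The product of magnitude cochains:
`(φ·ψ)(x_0,…,x_{j+k}) = φ(x_0,…,x_j) · ψ(x_j,…,x_{j+k})`,
where a cochain of length-degree `ℓ` vanishes on simplices of other lengths. -/
def MCup (M : GMS X) {j k : ℕ} {ℓ m : ℝ≥0} (φ : MCo M j ℓ) (ψ : MCo M k m) :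
    MCo M (j + k) (ℓ + m) :=
  fun s =>
    if h : M.len (frontT j k s.pts) = (ℓ : ℝ≥0∞) ∧ M.len (backT j k s.pts) = (m : ℝ≥0∞) then
      φ ⟨frontT j k s.pts, s.sep.front, h.1⟩ * ψ ⟨backT j k s.pts, s.sep.back, h.2⟩
    else 0

/-- The unit cochain `u ∈ MC^0_0`, with `u(x_0) = 1`. -/
def MCoUnit (M : GMS X) : MCo M 0 0 := fun _ => 1

/-- Transport of magnitude cohomology classes along equalities of bidegrees. -/
def MHcast (M : GMS X) {k k' : ℕ} {ℓ ℓ' : ℝ≥0} (hk : k = k') (hl : ℓ = ℓ')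
    (α : MagCohomology M k ℓ) : MagCohomology M k' ℓ' := hk ▸ hl ▸ α

/-- Transport of magnitude cochains along equalities of bidegrees. -/
def MCoCast (M : GMS X) {k k' : ℕ} {ℓ ℓ' : ℝ≥0} (hk : k = k') (hl : ℓ = ℓ')
    (φ : MCo M k ℓ) : MCo M k' ℓ' := hk ▸ hl ▸ φ

/-- The product on magnitude cohomology induced by the product of cochains. -/
def MHmul (M : GMS X) {j k : ℕ} {ℓ m : ℝ≥0} (α : MagCohomology M j ℓ)
    (β : MagCohomology M k m) : MagCohomology M (j + k) (ℓ + m) :=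
  cohClass M (MCup M (MHout M α) (MHout M β))

/-- The unit of the magnitude cohomology ring. -/
def MHone (M : GMS X) : MagCohomology M 0 0 := cohClass M (MCoUnit M)

/-- Two points are adjacent: their distance is nonzero and finite, and no
third point lies strictly between them. -/
def GMS.Adjacent (M : GMS X) (x y : X) : Prop :=
  M.d x y ≠ 0 ∧ M.d x y ≠ ∞ ∧ ∀ a, M.d x y = M.d x a + M.d a y → a = x ∨ a = y

/-- An isomorphism of magnitude cohomology rings: a family of additive
isomorphisms respecting both gradings, the product, and the unit. -/
def MHRingIso {Y : Type*} (M : GMS X) (M' : GMS Y) : Prop :=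
  ∃ e : ∀ (k : ℕ) (ℓ : ℝ≥0), MagCohomology M k ℓ ≃+ MagCohomology M' k ℓ,
    (e 0 0 (MHone M) = MHone M') ∧
    ∀ (j k : ℕ) (ℓ m : ℝ≥0) (α : MagCohomology M j ℓ) (β : MagCohomology M k m),
      e (j + k) (ℓ + m) (MHmul M α β) = MHmul M' (e j ℓ α) (e k m β)

namespace Recovery

variable {X : Type*} {Y : Type*}

lemma MSimplex.ext' {M : GMS X} {k : ℕ} {ℓ : ℝ≥0} {s t : MSimplex M k ℓ}
    (h : s.pts = t.pts) : s = t := by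
  cases s; cases t; simp_all

/-- Change the length index of a simplex along an equality of coercions. -/
def relen {M : GMS X} {k : ℕ} {ℓ ℓ' : ℝ≥0} (h : (ℓ : ℝ≥0∞) = (ℓ' : ℝ≥0∞))
    (s : MSimplex M k ℓ) : MSimplex M k ℓ' :=
  ⟨s.pts, s.sep, s.len_eq.trans h⟩

@[simp] lemma relen_pts {M : GMS X} {k : ℕ} {ℓ ℓ' : ℝ≥0} (h : (ℓ : ℝ≥0∞) = (ℓ' : ℝ≥0∞))
    (s : MSimplex M k ℓ) : (relen h s).pts = s.pts := rfl

lemma len_zero (M : GMS X) (x : Fin 1 → X) : M.len x = 0 := by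
  simp [GMS.len]

lemma len_one (M : GMS X) (x : Fin 2 → X) : M.len x = M.d (x 0) (x 1) := by
  simp [GMS.len, Fin.sum_univ_one]

lemma len_two (M : GMS X) (x : Fin 3 → X) :
    M.len x = M.d (x 0) (x 1) + M.d (x 1) (x 2) := by
  simp [GMS.len, Fin.sum_univ_two]

/-- The `0`-simplex at a point, for any length index whose value is zero. -/
def mk0 (M : GMS X) {ℓ : ℝ≥0} (h : (ℓ : ℝ≥0∞) = 0) (x : X) : MSimplex M 0 ℓ :=
  ⟨fun _ => x, fun i => absurd i.isLt (by omega), by simp [GMS.len, h]⟩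

@[simp] lemma mk0_pts (M : GMS X) {ℓ : ℝ≥0} (h : (ℓ : ℝ≥0∞) = 0) (x : X) (i : Fin 1) :
    (mk0 M h x).pts i = x := rfl

lemma mk0_pt0 (M : GMS X) {ℓ : ℝ≥0} (h : (ℓ : ℝ≥0∞) = 0) (s : MSimplex M 0 ℓ) :
    mk0 M h (s.pts 0) = s := by
  apply MSimplex.ext'
  funext i
  have : i = 0 := Fin.ext (by omega)
  subst this; rfl


/-! ### Degree 0 and 1 cochain facts -/

lemma delta_zero_from_deg0 (M : GMS X) (ℓ : ℝ≥0) : MCoDelta M 0 ℓ = 0 := by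
  ext φ s
  simp [MCoDelta]

lemma mem_cocycle_deg0 (M : GMS X) {ℓ : ℝ≥0} (φ : MCo M 0 ℓ) : φ ∈ MCocycle M 0 ℓ := by
  simp [MCocycle, delta_zero_from_deg0]

lemma bound_deg0 (M : GMS X) (ℓ : ℝ≥0) : MCobound M 0 ℓ = ⊥ := rfl

lemma bound_deg1 (M : GMS X) (ℓ : ℝ≥0) : MCobound M 1 ℓ = ⊥ := by
  show LinearMap.range (MCoDelta M 0 ℓ) = ⊥
  rw [delta_zero_from_deg0, LinearMap.range_zero]

lemma MHout_mem (M : GMS X) {k : ℕ} {ℓ : ℝ≥0} (α : MagCohomology M k ℓ) :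
    MHout M α ∈ MCocycle M k ℓ :=
  (((Submodule.Quotient.mk_surjective _) α).choose).2

lemma cohClass_eq_mk (M : GMS X) {k : ℕ} {ℓ : ℝ≥0} {φ : MCo M k ℓ}
    (hφ : φ ∈ MCocycle M k ℓ) :
    cohClass M φ = Submodule.Quotient.mk ⟨φ, hφ⟩ := dif_pos hφ

lemma cohClass_out (M : GMS X) {k : ℕ} {ℓ : ℝ≥0} (α : MagCohomology M k ℓ) :
    cohClass M (MHout M α) = α := by
  have hs := ((Submodule.Quotient.mk_surjective
      ((MCobound M k ℓ).comap (MCocycle M k ℓ).subtype)) α).choose_spec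
  rw [cohClass_eq_mk M (MHout_mem M α)]
  exact hs

lemma mk_inj_of_bot (M : GMS X) {k : ℕ} {ℓ : ℝ≥0} (hb : MCobound M k ℓ = ⊥)
    {φ ψ : MCo M k ℓ} (hφ : φ ∈ MCocycle M k ℓ) (hψ : ψ ∈ MCocycle M k ℓ)
    (h : (Submodule.Quotient.mk (p := (MCobound M k ℓ).comap (MCocycle M k ℓ).subtype)
        ⟨φ, hφ⟩ : MagCohomology M k ℓ) = Submodule.Quotient.mk ⟨ψ, hψ⟩) : φ = ψ := by
  rw [Submodule.Quotient.eq] at h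
  rw [Submodule.mem_comap, hb, Submodule.mem_bot] at h
  have h2 : φ - ψ = 0 := by simpa using h
  exact sub_eq_zero.mp h2

lemma out_cohClass (M : GMS X) {k : ℕ} {ℓ : ℝ≥0} (hb : MCobound M k ℓ = ⊥)
    {φ : MCo M k ℓ} (hφ : φ ∈ MCocycle M k ℓ) : MHout M (cohClass M φ) = φ := by
  set α := cohClass M φ with hα
  apply mk_inj_of_bot M hb (MHout_mem M α) hφ
  rw [← cohClass_eq_mk M (MHout_mem M α), ← cohClass_eq_mk M hφ, ← hα]
  exact cohClass_out M α

lemma cohClass_zero (M : GMS X) {k : ℕ} {ℓ : ℝ≥0} : cohClass M (0 : MCo M k ℓ) = 0 := by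
  rw [cohClass_eq_mk M (Submodule.zero_mem _)]
  exact congrArg _ rfl

lemma cohClass_eq_zero_iff (M : GMS X) {k : ℕ} {ℓ : ℝ≥0} (hb : MCobound M k ℓ = ⊥)
    {φ : MCo M k ℓ} (hφ : φ ∈ MCocycle M k ℓ) : cohClass M φ = 0 ↔ φ = 0 := by
  constructor
  · intro h
    have h1 : MHout M (cohClass M φ) = φ := out_cohClass M hb hφ
    have h2 : MHout M (cohClass M (0 : MCo M k ℓ)) = 0 :=
      out_cohClass M hb (Submodule.zero_mem _)
    rw [cohClass_zero] at h2
    rw [h] at h1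
    rw [← h1, ← h2]
  · rintro rfl
    exact cohClass_zero M

lemma cohClass_add (M : GMS X) {k : ℕ} {ℓ : ℝ≥0} {φ ψ : MCo M k ℓ}
    (hφ : φ ∈ MCocycle M k ℓ) (hψ : ψ ∈ MCocycle M k ℓ) :
    cohClass M (φ + ψ) = cohClass M φ + cohClass M ψ := by
  rw [cohClass_eq_mk M (Submodule.add_mem _ hφ hψ), cohClass_eq_mk M hφ, cohClass_eq_mk M hψ]
  rw [← Submodule.Quotient.mk_add]
  rfl

/-! ### Point classes and products -/

/-- Indicator cochain of a point. -/
def ind (M : GMS X) (x : X) : MCo M 0 0 := fun s => if s.pts 0 = x then 1 else 0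

/-- The cohomology class of a point. -/
def E (M : GMS X) (x : X) : MagCohomology M 0 0 := cohClass M (ind M x)

lemma MSimplex0_eq {M : GMS X} {ℓ : ℝ≥0} (s t : MSimplex M 0 ℓ)
    (h : s.pts 0 = t.pts 0) : s = t := by
  apply MSimplex.ext'
  funext i
  have hi : i = 0 := Fin.ext (by omega)
  subst hi
  exact h

lemma MSimplex1_eq {M : GMS X} {ℓ : ℝ≥0} (s t : MSimplex M 1 ℓ)
    (h0 : s.pts 0 = t.pts 0) (h1 : s.pts 1 = t.pts 1) : s = t := by
  apply MSimplex.ext'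
  funext i
  rcases i with ⟨iv, hi⟩
  interval_cases iv
  · exact h0
  · exact h1

lemma cup00 (M : GMS X) (φ ψ : MCo M 0 0) (s : MSimplex M 0 (0+0)) :
    MCup M φ ψ s = φ (mk0 M (by simp) (s.pts 0)) * ψ (mk0 M (by simp) (s.pts 0)) := by
  unfold MCup
  have hc : M.len (frontT 0 0 s.pts) = ((0:ℝ≥0):ℝ≥0∞) ∧
      M.len (backT 0 0 s.pts) = ((0:ℝ≥0):ℝ≥0∞) := ⟨by simp [GMS.len], by simp [GMS.len]⟩
  rw [dif_pos hc]
  exact congrArg₂ (· * ·) (congrArg φ (MSimplex0_eq _ _ rfl)) (congrArg ψ (MSimplex0_eq _ _ rfl))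

lemma delta_one_apply (M : GMS X) {ℓ : ℝ≥0} (φ : MCo M 1 ℓ) (s : MSimplex M 2 ℓ) :
    MCoDelta M 1 ℓ φ s = -(if h : M.FaceOK s 0 then φ (M.face s 0 h) else 0) := by
  simp only [MCoDelta, LinearMap.coe_mk, AddHom.coe_mk]
  rw [Fin.sum_univ_one]
  split <;> norm_num

lemma cocycle_one_iff (M : GMS X) {ℓ : ℝ≥0} (φ : MCo M 1 ℓ) :
    φ ∈ MCocycle M 1 ℓ ↔ ∀ (s : MSimplex M 2 ℓ) (h : M.FaceOK s 0), φ (M.face s 0 h) = 0 := by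
  unfold MCocycle
  rw [LinearMap.mem_ker]
  constructor
  · intro h s hf
    have h2 := congrFun h s
    rw [delta_one_apply, dif_pos hf] at h2
    simpa using h2
  · intro h
    funext s
    rw [delta_one_apply]
    simp only [Pi.zero_apply, neg_eq_zero]
    split
    · exact h s ‹_›
    · rfl

lemma backT01 (z : Fin (0+1+1) → X) : backT 0 1 z = z := by
  funext i
  exact congrArg z (Fin.ext (Nat.zero_add _))

lemma frontT10 (z : Fin ((0+1)+0+1) → X) : frontT (0+1) 0 z = z := by
  funext i
  exact congrArg z (Fin.ext rfl)

lemma cup_ind_left (M : GMS X) (x : X) {ℓ : ℝ≥0} (φ : MCo M 1 ℓ)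
    (hco : ((0+ℓ : ℝ≥0) : ℝ≥0∞) = (ℓ : ℝ≥0∞))
    (s : MSimplex M (0+1) (0+ℓ)) :
    MCup M (ind M x) φ s = (if s.pts 0 = x then 1 else 0) * φ (relen hco s) := by
  unfold MCup
  have hc : M.len (frontT 0 1 s.pts) = ((0:ℝ≥0):ℝ≥0∞) ∧
      M.len (backT 0 1 s.pts) = (ℓ:ℝ≥0∞) := by
    refine ⟨by simp [GMS.len], ?_⟩
    rw [backT01]
    exact s.len_eq.trans hco
  rw [dif_pos hc]
  congr 1
  exact congrArg φ (MSimplex.ext' (backT01 s.pts))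

lemma cup_ind_right (M : GMS X) (y : X) {ℓ : ℝ≥0} (ψ : MCo M (0+1) (0+ℓ))
    (hco : (((0+ℓ)+0 : ℝ≥0) : ℝ≥0∞) = ((0+ℓ : ℝ≥0) : ℝ≥0∞))
    (s : MSimplex M ((0+1)+0) ((0+ℓ)+0)) :
    MCup M ψ (ind M y) s = ψ (relen hco s) * (if s.pts 1 = y then 1 else 0) := by
  unfold MCup
  have hc : M.len (frontT (0+1) 0 s.pts) = ((0+ℓ:ℝ≥0):ℝ≥0∞) ∧
      M.len (backT (0+1) 0 s.pts) = ((0:ℝ≥0):ℝ≥0∞) := by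
    refine ⟨?_, by simp [GMS.len]⟩
    rw [frontT10]
    exact s.len_eq.trans hco
  rw [dif_pos hc]
  congr 1

lemma cup_ind_left_cocycle (M : GMS X) (x : X) {ℓ : ℝ≥0} (φ : MCo M 1 ℓ)
    (hφ : φ ∈ MCocycle M 1 ℓ)
    (hco : ((0+ℓ : ℝ≥0) : ℝ≥0∞) = (ℓ : ℝ≥0∞)) :
    MCup M (ind M x) φ ∈ MCocycle M (0+1) (0+ℓ) := by
  refine (cocycle_one_iff M (ℓ := 0+ℓ) _).mpr ?_
  intro s hf
  rw [cup_ind_left M x φ hco]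
  have hft : M.FaceOK (relen hco s) (0 : Fin 1) := ⟨hf.1, hf.2.1, hf.2.2.trans hco⟩
  have hval : φ (relen hco (M.face s 0 hf)) = 0 := by
    have h0 := (cocycle_one_iff M φ).mp hφ (relen hco s) hft
    have heq : relen hco (M.face s 0 hf) = M.face (relen hco s) 0 hft :=
      MSimplex.ext' rfl
    rw [heq]
    exact h0
  rw [hval, mul_zero]

lemma cup_ind_right_cocycle (M : GMS X) (y : X) {ℓ : ℝ≥0} (ψ : MCo M (0+1) (0+ℓ))
    (hψ : ψ ∈ MCocycle M (0+1) (0+ℓ))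
    (hco : (((0+ℓ)+0 : ℝ≥0) : ℝ≥0∞) = ((0+ℓ : ℝ≥0) : ℝ≥0∞)) :
    MCup M ψ (ind M y) ∈ MCocycle M ((0+1)+0) ((0+ℓ)+0) := by
  refine (cocycle_one_iff M (ℓ := (0+ℓ)+0) _).mpr ?_
  intro s hf
  rw [cup_ind_right M y ψ hco]
  have hft : M.FaceOK (relen hco s) (0 : Fin 1) := ⟨hf.1, hf.2.1, hf.2.2.trans hco⟩
  have hval : ψ (relen hco (M.face s 0 hf)) = 0 := by
    have h0 := (cocycle_one_iff M (ℓ := 0+ℓ) ψ).mp hψ (relen hco s) hft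
    have heq : relen hco (M.face s 0 hf) = M.face (relen hco s) 0 hft :=
      MSimplex.ext' rfl
    rw [heq]
    exact h0
  rw [hval, zero_mul]

lemma triple_eval (M : GMS X) (x y : X) {ℓ : ℝ≥0} (α : MagCohomology M 1 ℓ) :
    (MHmul M (MHmul M (E M x) α) (E M y) ≠ 0) ↔
      ∃ s : MSimplex M 1 ℓ, s.pts 0 = x ∧ s.pts 1 = y ∧ MHout M α s ≠ 0 := by
  have hco1 : ((0+ℓ : ℝ≥0) : ℝ≥0∞) = (ℓ : ℝ≥0∞) := by rw [zero_add]
  have hco2 : (((0+ℓ)+0 : ℝ≥0) : ℝ≥0∞) = ((0+ℓ : ℝ≥0) : ℝ≥0∞) := by rw [add_zero]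
  have hφ : MHout M α ∈ MCocycle M 1 ℓ := MHout_mem M α
  have h1 : MHmul M (E M x) α = cohClass M (MCup M (ind M x) (MHout M α)) := by
    unfold MHmul E
    rw [out_cohClass M (bound_deg0 M 0) (mem_cocycle_deg0 M _)]
  have hξ : MCup M (ind M x) (MHout M α) ∈ MCocycle M (0+1) (0+ℓ) :=
    cup_ind_left_cocycle M x (MHout M α) hφ hco1
  have h2 : MHmul M (MHmul M (E M x) α) (E M y)
      = cohClass M (MCup M (MCup M (ind M x) (MHout M α)) (ind M y)) := by
    rw [h1]
    unfold MHmul E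
    rw [out_cohClass (M := M) (k := 0+1) (ℓ := 0+ℓ) (bound_deg1 M (0+ℓ)) hξ,
      out_cohClass M (bound_deg0 M 0) (mem_cocycle_deg0 M _)]
  have hη : MCup M (MCup M (ind M x) (MHout M α)) (ind M y)
      ∈ MCocycle M ((0+1)+0) ((0+ℓ)+0) :=
    cup_ind_right_cocycle M y _ hξ hco2
  rw [h2, not_iff_comm, not_exists]
  rw [cohClass_eq_zero_iff (M := M) (k := (0+1)+0) (ℓ := (0+ℓ)+0)
    (bound_deg1 M ((0+ℓ)+0)) hη]
  constructor
  · intro h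
    funext s
    rw [cup_ind_right M y _ hco2, cup_ind_left M x (MHout M α) hco1]
    simp only [Pi.zero_apply, relen_pts]
    by_cases h0 : s.pts 0 = x
    · by_cases hy : s.pts 1 = y
      · have hh := h (relen hco1 (relen hco2 s))
        push_neg at hh
        have hv : MHout M α (relen hco1 (relen hco2 s)) = 0 := hh h0 hy
        rw [hv]
        ring
      · rw [if_neg hy]; ring
    · simp [h0]
  · intro h s
    rintro ⟨hs0, hs1, hsv⟩
    apply hsv
    have hts := congrFun h (relen (hco2.trans hco1).symm s)
    rw [cup_ind_right M y _ hco2, cup_ind_left M x (MHout M α) hco1] at hts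
    simp only [Pi.zero_apply, relen_pts] at hts
    have hback : relen hco1 (relen hco2 (relen (hco2.trans hco1).symm s)) = s :=
      MSimplex.ext' rfl
    rw [hback] at hts
    simp [hs0, hs1] at hts
    simpa using hts

/-! ### Adjacency detected by the cohomology ring -/

def pairT (x y : X) : Fin 2 → X := fun i => if i.val = 0 then x else y

def tripleT (x a y : X) : Fin 3 → X :=
  fun i => if i.val = 0 then x else if i.val = 1 then a else y

def pairS (M : GMS X) {ℓ : ℝ≥0} (x y : X) (hxy : x ≠ y)
    (hd : M.d x y = (ℓ : ℝ≥0∞)) : MSimplex M 1 ℓ :=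
  ⟨pairT x y, by
    intro i
    have hi : i = 0 := Fin.ext (by omega)
    subst hi
    exact hxy, by rw [len_one]; exact hd⟩

@[simp] lemma pairS_pts0 (M : GMS X) {ℓ : ℝ≥0} (x y : X) (hxy : x ≠ y)
    (hd : M.d x y = (ℓ : ℝ≥0∞)) : (pairS M x y hxy hd).pts 0 = x := rfl

@[simp] lemma pairS_pts1 (M : GMS X) {ℓ : ℝ≥0} (x y : X) (hxy : x ≠ y)
    (hd : M.d x y = (ℓ : ℝ≥0∞)) : (pairS M x y hxy hd).pts 1 = y := rfl

def tripleS (M : GMS X) {ℓ : ℝ≥0} (x a y : X) (h1 : x ≠ a) (h2 : a ≠ y)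
    (hlen : M.d x a + M.d a y = (ℓ : ℝ≥0∞)) : MSimplex M 2 ℓ :=
  ⟨tripleT x a y, by
    intro i
    rcases i with ⟨iv, hi⟩
    interval_cases iv
    · exact h1
    · exact h2, by rw [len_two]; exact hlen⟩

lemma sep01 {M : GMS X} {ℓ : ℝ≥0} (s : MSimplex M 1 ℓ) : s.pts 0 ≠ s.pts 1 :=
  s.sep 0

lemma d01 {M : GMS X} {ℓ : ℝ≥0} (s : MSimplex M 1 ℓ) :
    M.d (s.pts 0) (s.pts 1) = (ℓ : ℝ≥0∞) :=
  (len_one M s.pts).symm.trans s.len_eq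

lemma adj_iff_class (M : GMS X) (hq : M.Quasi) (x y : X) (ℓ : ℝ≥0) :
    (∃ α : MagCohomology M 1 ℓ, MHmul M (MHmul M (E M x) α) (E M y) ≠ 0) ↔
      (M.Adjacent x y ∧ M.d x y = (ℓ : ℝ≥0∞)) := by
  constructor
  · rintro ⟨α, hα⟩
    obtain ⟨s, hs0, hs1, hsv⟩ := (triple_eval M x y α).mp hα
    have hne : x ≠ y := by
      rw [← hs0, ← hs1]
      exact sep01 s
    have hd : M.d x y = (ℓ : ℝ≥0∞) := by
      rw [← hs0, ← hs1]
      exact d01 s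
    refine ⟨⟨?_, ?_, ?_⟩, hd⟩
    · intro h0
      exact hne (hq x y h0)
    · rw [hd]; exact ENNReal.coe_ne_top
    · intro a ha
      by_contra hcon
      push_neg at hcon
      obtain ⟨hax, hay⟩ := hcon
      have hlen : M.d x a + M.d a y = (ℓ : ℝ≥0∞) := by rw [← ha]; exact hd
      set u := tripleS M x a y (Ne.symm hax) hay hlen with hu
      have hfo : M.FaceOK u (0 : Fin 1) := by
        refine ⟨ha, ?_, ?_⟩
        · intro i
          have hi : i = 0 := Fin.ext (by omega)
          subst hi
          exact hne
        · rw [len_one]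
          exact hd
      have hz := (cocycle_one_iff M (MHout M α)).mp (MHout_mem M α) u hfo
      have hface : M.face u 0 hfo = s := by
        apply MSimplex1_eq
        · exact hs0.symm ▸ rfl
        · exact hs1.symm ▸ rfl
      rw [hface] at hz
      exact hsv hz
  · rintro ⟨hadj, hd⟩
    have hne : x ≠ y := by
      intro h
      apply hadj.1
      rw [h, M.d_self]
    have hcoc : (fun s : MSimplex M 1 ℓ => if s.pts 0 = x ∧ s.pts 1 = y then (1:ℤ) else 0)
        ∈ MCocycle M 1 ℓ := by
      refine (cocycle_one_iff M _).mpr ?_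
      intro u hf
      rw [if_neg]
      rintro ⟨ha, hb⟩
      have h0 : u.pts 0 = x := ha
      have h2 : u.pts 2 = y := hb
      have hsum : M.d (u.pts 0) (u.pts 2) = M.d (u.pts 0) (u.pts 1) + M.d (u.pts 1) (u.pts 2) :=
        hf.1
      rw [h0, h2] at hsum
      rcases hadj.2.2 (u.pts 1) hsum with h | h
      · exact (u.sep 0) (h0.trans h.symm)
      · exact (u.sep 1) (h.trans h2.symm)
    refine ⟨cohClass M (fun s => if s.pts 0 = x ∧ s.pts 1 = y then (1:ℤ) else 0), ?_⟩
    rw [triple_eval]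
    refine ⟨pairS M x y hne hd, rfl, rfl, ?_⟩
    rw [out_cohClass M (bound_deg1 M ℓ) hcoc]
    simp

/-! ### The degree-zero ring and its idempotents -/

/-- `MH^0_0` is additively the group of `ℤ`-valued functions on `X`. -/
def A (M : GMS X) : (X → ℤ) ≃+ MagCohomology M 0 0 where
  toFun g := cohClass M (fun s => g (s.pts 0))
  invFun α := fun x => MHout M α (mk0 M (by simp) x)
  left_inv g := by
    funext x
    show MHout M (cohClass M fun s => g (s.pts 0)) (mk0 M (by simp) x) = g x
    rw [out_cohClass M (bound_deg0 M 0) (mem_cocycle_deg0 M _)]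
    rfl
  right_inv α := by
    have h : (fun s : MSimplex M 0 0 => MHout M α ((mk0 M (by simp) (s.pts 0)))) = MHout M α := by
      funext s
      rw [mk0_pt0]
    simp only [h]
    rw [cohClass_out]
  map_add' g h := by
    have hgh : (fun s : MSimplex M 0 0 => (g + h) (s.pts 0))
        = (fun s => g (s.pts 0)) + (fun s => h (s.pts 0)) := rfl
    simp only [hgh]
    rw [cohClass_add M (mem_cocycle_deg0 M _) (mem_cocycle_deg0 M _)]

lemma A_apply (M : GMS X) (g : X → ℤ) : A M g = cohClass M (fun s => g (s.pts 0)) := rfl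

lemma A_one (M : GMS X) : A M (1 : X → ℤ) = MHone M := rfl

lemma mul_A (M : GMS X) (g h : X → ℤ) :
    MHmul M (A M g) (A M h)
      = cohClass M (fun s : MSimplex M 0 (0+0) => g (s.pts 0) * h (s.pts 0)) := by
  unfold MHmul
  rw [A_apply, A_apply,
    out_cohClass M (bound_deg0 M 0) (mem_cocycle_deg0 M _),
    out_cohClass M (bound_deg0 M 0) (mem_cocycle_deg0 M _)]
  refine congrArg (cohClass M) (funext fun s => ?_)
  rw [cup00]
  rfl

variable {M : GMS X} {M' : GMS Y}

/-- The transferred ring equivalence on function spaces. -/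
def Psi (e : ∀ (k : ℕ) (ℓ : ℝ≥0), MagCohomology M k ℓ ≃+ MagCohomology M' k ℓ) :
    (X → ℤ) ≃+ (Y → ℤ) :=
  ((A M).trans (e 0 0)).trans (A M').symm

lemma Psi_apply (e : ∀ (k : ℕ) (ℓ : ℝ≥0), MagCohomology M k ℓ ≃+ MagCohomology M' k ℓ)
    (g : X → ℤ) : Psi e g = (A M').symm (e 0 0 (A M g)) := rfl

lemma Psi_one (e : ∀ (k : ℕ) (ℓ : ℝ≥0), MagCohomology M k ℓ ≃+ MagCohomology M' k ℓ)
    (hone : e 0 0 (MHone M) = MHone M') : Psi e 1 = 1 := by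
  rw [Psi_apply, A_one, hone, ← A_one M']
  exact (A M').symm_apply_apply 1

lemma Psi_mul (e : ∀ (k : ℕ) (ℓ : ℝ≥0), MagCohomology M k ℓ ≃+ MagCohomology M' k ℓ)
    (hmul : ∀ (j k : ℕ) (ℓ m : ℝ≥0) (α : MagCohomology M j ℓ) (β : MagCohomology M k m),
      e (j + k) (ℓ + m) (MHmul M α β) = MHmul M' (e j ℓ α) (e k m β))
    (g h : X → ℤ) : Psi e (g * h) = Psi e g * Psi e h := by
  have hg := hmul 0 0 0 0 (A M g) (A M h)
  rw [mul_A, ← (A M').apply_symm_apply (e 0 0 (A M g)),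
    ← (A M').apply_symm_apply (e 0 0 (A M h)), mul_A] at hg
  revert hg
  generalize h0 : (0:ℝ≥0) + 0 = c
  have hc : c = 0 := by rw [← h0, add_zero]
  subst hc
  intro hg
  rw [Psi_apply, AddEquiv.symm_apply_eq]
  exact hg

/-! ### Minimal idempotents in `Z → ℤ` -/

def delta {Z : Type*} (x : Z) : Z → ℤ := fun a => if a = x then 1 else 0

lemma E_eq_A_delta (M : GMS X) (x : X) : E M x = A M (delta x) := rfl

def IsMinIdem {Z : Type*} (p : Z → ℤ) : Prop :=
  p * p = p ∧ p ≠ 0 ∧ ∀ q : Z → ℤ, q * q = q → q * p = q → q = 0 ∨ q = p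

lemma int_idem {a : ℤ} (h : a * a = a) : a = 0 ∨ a = 1 := by
  have h2 : a * (a - 1) = 0 := by rw [mul_sub, h, mul_one, sub_self]
  rcases mul_eq_zero.mp h2 with h3 | h3
  · exact Or.inl h3
  · exact Or.inr (by omega)

lemma isMinIdem_delta {Z : Type*} (x : Z) : IsMinIdem (delta x) := by
  refine ⟨?_, ?_, ?_⟩
  · funext a
    by_cases h : a = x <;> simp [delta, h]
  · intro h
    have := congrFun h x
    simp [delta] at this
  · intro q hq hqp
    have hq0 : ∀ a, a ≠ x → q a = 0 := by
      intro a ha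
      have := congrFun hqp a
      simpa [delta, ha] using this.symm
    rcases int_idem (congrFun hq x) with h | h
    · left
      funext a
      by_cases ha : a = x
      · subst ha; exact h
      · exact hq0 a ha
    · right
      funext a
      by_cases ha : a = x
      · subst ha; simp [delta, h]
      · simp [delta, ha, hq0 a ha]

lemma eq_delta_of_minIdem {Z : Type*} {p : Z → ℤ} (h : IsMinIdem p) : ∃ x, p = delta x := by
  obtain ⟨hp, hp0, hmin⟩ := h
  obtain ⟨x, hx⟩ := Function.ne_iff.mp hp0
  have hx1 : p x = 1 := by
    rcases int_idem (congrFun hp x) with h | h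
    · exact absurd h (by simpa using hx)
    · exact h
  have hδp : delta x * p = delta x := by
    funext a
    by_cases ha : a = x
    · subst ha; simp [delta, hx1]
    · simp [delta, ha]
  rcases hmin (delta x) ((isMinIdem_delta x).1) hδp with h | h
  · exact absurd h (isMinIdem_delta x).2.1
  · exact ⟨x, h.symm⟩

lemma isMinIdem_map {Z W : Type*} (Φ : (Z → ℤ) ≃+ (W → ℤ))
    (hm : ∀ a b, Φ (a * b) = Φ a * Φ b) {p : Z → ℤ} (h : IsMinIdem p) :
    IsMinIdem (Φ p) := by
  obtain ⟨hp, hp0, hmin⟩ := h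
  refine ⟨by rw [← hm, hp], ?_, ?_⟩
  · intro h0
    exact hp0 (by simpa using Φ.injective (h0.trans (map_zero Φ).symm))
  · intro q hq hqp
    have hminv : ∀ a b, Φ.symm (a * b) = Φ.symm a * Φ.symm b := by
      intro a b
      apply Φ.injective
      rw [hm, Φ.apply_symm_apply, Φ.apply_symm_apply, Φ.apply_symm_apply]
    have h1 : Φ.symm q * Φ.symm q = Φ.symm q := by rw [← hminv, hq]
    have h2 : Φ.symm q * p = Φ.symm q := by
      have : Φ.symm q * Φ.symm (Φ p) = Φ.symm q := by rw [← hminv, hqp]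
      rwa [Φ.symm_apply_apply] at this
    rcases hmin _ h1 h2 with h3 | h3
    · left
      have := congrArg Φ h3
      rwa [Φ.apply_symm_apply, map_zero] at this
    · right
      have := congrArg Φ h3
      rwa [Φ.apply_symm_apply] at this

/-! ### Chains of adjacent points -/

def csum (M : GMS X) : X → List X → X → ℝ≥0∞
  | x, [], y => M.d x y
  | x, a :: l, y => M.d x a + csum M a l y

def adjC (M : GMS X) : X → List X → X → Prop
  | x, [], y => M.Adjacent x y
  | x, a :: l, y => M.Adjacent x a ∧ adjC M a l y

def pc (M : GMS X) : X → List X → X → Prop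
  | x, [], y => x ≠ y
  | x, a :: l, y => x ≠ a ∧ pc M a l y

lemma d_le_csum (M : GMS X) : ∀ (l : List X) (x y : X), M.d x y ≤ csum M x l y := by
  intro l
  induction l with
  | nil => intro x y; exact le_rfl
  | cons a l ih =>
    intro x y
    calc M.d x y ≤ M.d x a + M.d a y := M.d_triangle x a y
    _ ≤ M.d x a + csum M a l y := add_le_add le_rfl (ih a y)
    _ = csum M x (a :: l) y := rfl

lemma csum_lb (M : GMS X) (r : ℝ≥0∞) (hr : ∀ a b : X, a ≠ b → r ≤ M.d a b) :
    ∀ (l : List X) (x y : X), pc M x l y → ((l.length + 1 : ℕ) : ℝ≥0∞) * r ≤ csum M x l y := by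
  intro l
  induction l with
  | nil =>
    intro x y h
    simpa [csum] using hr x y h
  | cons a l ih =>
    intro x y h
    have : ((l.length + 1 + 1 : ℕ) : ℝ≥0∞) * r = r + ((l.length + 1 : ℕ) : ℝ≥0∞) * r := by
      push_cast
      ring
    rw [List.length_cons, this]
    exact add_le_add (hr x a h.1) (ih a y h.2)

lemma refine_chain (M : GMS X) (hq : M.Quasi) :
    ∀ (l : List X) (x y : X), pc M x l y → csum M x l y ≠ ∞ → ¬ adjC M x l y →
      ∃ l' : List X, l'.length = l.length + 1 ∧ pc M x l' y ∧
        csum M x l' y = csum M x l y := by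
  intro l
  induction l with
  | nil =>
    intro x y hpc hfin hnadj
    have hd0 : M.d x y ≠ 0 := fun h => hpc (hq x y h)
    have hdt : M.d x y ≠ ∞ := hfin
    have : ∃ m, M.d x y = M.d x m + M.d m y ∧ m ≠ x ∧ m ≠ y := by
      by_contra hcon
      push_neg at hcon
      apply hnadj
      refine ⟨hd0, hdt, ?_⟩
      intro m hm
      by_cases h1 : m = x
      · exact Or.inl h1
      · right
        by_contra h2
        exact h2 (hcon m hm h1)
    obtain ⟨m, hm, hmx, hmy⟩ := this
    exact ⟨[m], rfl, ⟨fun h => hmx h.symm, hmy⟩, by simpa [csum] using hm.symm⟩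
  | cons a l ih =>
    intro x y hpc hfin hnadj
    by_cases hadj1 : M.Adjacent x a
    · have hnadj2 : ¬ adjC M a l y := fun h => hnadj ⟨hadj1, h⟩
      have hfin2 : csum M a l y ≠ ∞ := by
        intro h
        apply hfin
        show M.d x a + csum M a l y = ∞
        rw [h, add_top]
      obtain ⟨l', hlen, hpc', hsum⟩ := ih a y hpc.2 hfin2 hnadj2
      refine ⟨a :: l', by simp [hlen], ⟨hpc.1, hpc'⟩, ?_⟩
      show M.d x a + csum M a l' y = M.d x a + csum M a l y
      rw [hsum]
    · have hd0 : M.d x a ≠ 0 := fun h => hpc.1 (hq x a h)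
      have hdt : M.d x a ≠ ∞ := by
        intro h
        apply hfin
        show M.d x a + csum M a l y = ∞
        rw [h, top_add]
      have : ∃ m, M.d x a = M.d x m + M.d m a ∧ m ≠ x ∧ m ≠ a := by
        by_contra hcon
        push_neg at hcon
        apply hadj1
        refine ⟨hd0, hdt, ?_⟩
        intro m hm
        by_cases h1 : m = x
        · exact Or.inl h1
        · right
          by_contra h2
          exact h2 (hcon m hm h1)
      obtain ⟨m, hm, hmx, hma⟩ := this
      refine ⟨m :: a :: l, rfl, ⟨fun h => hmx h.symm, ⟨hma, hpc.2⟩⟩, ?_⟩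
      show M.d x m + (M.d m a + csum M a l y) = M.d x a + csum M a l y
      rw [← add_assoc, ← hm]

lemma exists_adj_chain (M : GMS X) (hq : M.Quasi)
    (hpos : 0 < ⨅ (a : X) (b : X) (_ : a ≠ b), M.d a b)
    (x y : X) (hne : x ≠ y) (hfin : M.d x y ≠ ∞) :
    ∃ l : List X, adjC M x l y ∧ csum M x l y = M.d x y := by
  set ε := ⨅ (a : X) (b : X) (_ : a ≠ b), M.d a b with hεdef
  have hεle : ∀ a b : X, a ≠ b → ε ≤ M.d a b := by
    intro a b hab
    calc ε ≤ ⨅ (b : X) (_ : a ≠ b), M.d a b := iInf_le _ a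
    _ ≤ ⨅ (_ : a ≠ b), M.d a b := iInf_le _ b
    _ ≤ M.d a b := iInf_le _ hab
  obtain ⟨r, hr0, hrε, hrtop⟩ : ∃ r : ℝ≥0∞, 0 < r ∧ r ≤ ε ∧ r ≠ ∞ := by
    rcases eq_or_ne ε ∞ with h | h
    · exact ⟨1, one_pos, by rw [h]; exact le_top, ENNReal.one_ne_top⟩
    · exact ⟨ε, hpos, le_rfl, h⟩
  have hrle : ∀ a b : X, a ≠ b → r ≤ M.d a b := fun a b hab => hrε.trans (hεle a b hab)
  set P : ℕ → Prop := fun n => ∃ l : List X, l.length = n ∧ pc M x l y ∧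
    csum M x l y = M.d x y with hPdef
  have hP0 : P 0 := ⟨[], rfl, hne, rfl⟩
  obtain ⟨N, hN⟩ := ENNReal.exists_nat_gt
    (ENNReal.div_lt_top hfin hr0.ne').ne
  have hPle : ∀ n, P n → n ≤ N := by
    intro n hPn
    obtain ⟨l, hlen, hpc, hsum⟩ := hPn
    have h1 : ((n + 1 : ℕ) : ℝ≥0∞) * r ≤ M.d x y := by
      rw [← hsum, ← hlen]
      exact csum_lb M r hrle l x y hpc
    have h2 : ((n + 1 : ℕ) : ℝ≥0∞) ≤ M.d x y / r :=
      (ENNReal.le_div_iff_mul_le (Or.inl hr0.ne') (Or.inl hrtop)).mpr h1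
    have h3 : ((n + 1 : ℕ) : ℝ≥0∞) < (N : ℝ≥0∞) := lt_of_le_of_lt h2 hN
    have h4 : n + 1 < N := by exact_mod_cast h3
    omega
  set n₀ := Nat.findGreatest P N with hn₀
  have hPn₀ : P n₀ := Nat.findGreatest_spec (hPle 0 hP0) hP0
  obtain ⟨l, hlen, hpc, hsum⟩ := hPn₀
  refine ⟨l, ?_, hsum⟩
  by_contra hnadj
  obtain ⟨l', hlen', hpc', hsum'⟩ :=
    refine_chain M hq l x y hpc (by rw [hsum]; exact hfin) hnadj
  have hP1 : P (n₀ + 1) := ⟨l', by rw [hlen', hlen], hpc', by rw [hsum', hsum]⟩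
  exact Nat.findGreatest_is_greatest (by omega) (hPle _ hP1) hP1

lemma csum_map (M : GMS X) (M' : GMS Y) (F : X → Y)
    (hF : ∀ a b : X, M.Adjacent a b → M'.Adjacent (F a) (F b) ∧ M'.d (F a) (F b) = M.d a b) :
    ∀ (l : List X) (x y : X), adjC M x l y →
      adjC M' (F x) (l.map F) (F y) ∧ csum M' (F x) (l.map F) (F y) = csum M x l y := by
  intro l
  induction l with
  | nil => intro x y h; exact ⟨(hF x y h).1, (hF x y h).2⟩
  | cons a l ih =>
    intro x y h
    refine ⟨⟨(hF x a h.1).1, (ih a y h.2).1⟩, ?_⟩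
    show M'.d (F x) (F a) + csum M' (F a) (l.map F) (F y) = M.d x a + csum M a l y
    rw [(hF x a h.1).2, (ih a y h.2).2]

lemma dist_le_of_adjpres (M : GMS X) (M' : GMS Y) (hq : M.Quasi)
    (hpos : 0 < ⨅ (a : X) (b : X) (_ : a ≠ b), M.d a b) (F : X → Y)
    (hF : ∀ a b : X, M.Adjacent a b → M'.Adjacent (F a) (F b) ∧ M'.d (F a) (F b) = M.d a b)
    (x y : X) (hfin : M.d x y ≠ ∞) : M'.d (F x) (F y) ≤ M.d x y := by
  rcases eq_or_ne x y with rfl | hne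
  · rw [M'.d_self]; exact zero_le
  obtain ⟨l, hadj, hsum⟩ := exists_adj_chain M hq hpos x y hne hfin
  calc M'.d (F x) (F y) ≤ csum M' (F x) (l.map F) (F y) := d_le_csum M' _ _ _
  _ = csum M x l y := (csum_map M M' F hF l x y hadj).2
  _ = M.d x y := hsum

lemma delta_inj {Z : Type*} {a b : Z} (h : delta a = delta b) : a = b := by
  by_contra hne
  have := congrFun h a
  simp [delta, hne] at this

lemma e_eq_zero_iff {M : GMS X} {M' : GMS Y} {k : ℕ} {ℓ : ℝ≥0}
    (ee : MagCohomology M k ℓ ≃+ MagCohomology M' k ℓ) (z : MagCohomology M k ℓ) :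
    ee z = 0 ↔ z = 0 := by
  constructor
  · intro h
    have h1 := congrArg ee.symm h
    rwa [ee.symm_apply_apply, map_zero] at h1
  · rintro rfl
    exact map_zero ee
end Recovery

/-- **Recovery theorem.** If `X` and `X'` are extended quasi-metric spaces in
which the infimum of distances between distinct points is strictly positive,
and their magnitude cohomology rings are isomorphic as bigraded associative
unital rings, then `X` and `X'` are isometric. -/
theorem recovery_theorem {X Y : Type*} (M : GMS X) (M' : GMS Y)
    (hq : M.Quasi) (hq' : M'.Quasi)
    (hpos : 0 < ⨅ (a : X) (b : X) (_ : a ≠ b), M.d a b)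
    (hpos' : 0 < ⨅ (a : Y) (b : Y) (_ : a ≠ b), M'.d a b)
    (hiso : MHRingIso M M') :
    ∃ f : X → Y, Function.Bijective f ∧ ∀ a b : X, M'.d (f a) (f b) = M.d a b := by
  obtain ⟨e, hone, hmul⟩ := hiso
  set Ψ := Recovery.Psi e with hΨ
  have hΨmul : ∀ g h : X → ℤ, Ψ (g * h) = Ψ g * Ψ h := Recovery.Psi_mul e hmul
  have hmin : ∀ x : X, ∃ y : Y, Ψ (Recovery.delta x) = Recovery.delta y := fun x =>
    Recovery.eq_delta_of_minIdem
      (Recovery.isMinIdem_map Ψ hΨmul (Recovery.isMinIdem_delta x))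
  choose f hf using hmin
  have hΨsymm_mul : ∀ a b : Y → ℤ, Ψ.symm (a * b) = Ψ.symm a * Ψ.symm b := by
    intro a b
    apply Ψ.injective
    rw [hΨmul, Ψ.apply_symm_apply, Ψ.apply_symm_apply, Ψ.apply_symm_apply]
  have hmin' : ∀ y : Y, ∃ x : X, Ψ.symm (Recovery.delta y) = Recovery.delta x := fun y =>
    Recovery.eq_delta_of_minIdem
      (Recovery.isMinIdem_map Ψ.symm hΨsymm_mul (Recovery.isMinIdem_delta y))
  choose g hg using hmin'
  have hgf : ∀ x, g (f x) = x := by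
    intro x
    apply Recovery.delta_inj
    rw [← hg (f x), ← hf x, Ψ.symm_apply_apply]
  have hfg : ∀ y, f (g y) = y := by
    intro y
    apply Recovery.delta_inj
    rw [← hf (g y), ← hg y, Ψ.apply_symm_apply]
  have hE : ∀ x : X, e 0 0 (Recovery.E M x) = Recovery.E M' (f x) := by
    intro x
    rw [Recovery.E_eq_A_delta, Recovery.E_eq_A_delta, ← hf x, hΨ]
    rw [Recovery.Psi_apply, (Recovery.A M').apply_symm_apply]
  have htrans : ∀ (x y : X) (ℓ : ℝ≥0) (α : MagCohomology M 1 ℓ),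
      e ((0+1)+0) ((0+ℓ)+0)
          (MHmul M (MHmul M (Recovery.E M x) α) (Recovery.E M y))
        = MHmul M' (MHmul M' (Recovery.E M' (f x)) (e 1 ℓ α)) (Recovery.E M' (f y)) := by
    intro x y ℓ α
    rw [hmul (0+1) 0 (0+ℓ) 0 (MHmul M (Recovery.E M x) α) (Recovery.E M y)]
    rw [hmul 0 1 0 ℓ (Recovery.E M x) α]
    rw [hE x, hE y]
  have hAdjIff : ∀ (x y : X) (ℓ : ℝ≥0),
      (M.Adjacent x y ∧ M.d x y = (ℓ : ℝ≥0∞)) ↔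
        (M'.Adjacent (f x) (f y) ∧ M'.d (f x) (f y) = (ℓ : ℝ≥0∞)) := by
    intro x y ℓ
    rw [← Recovery.adj_iff_class M hq x y ℓ, ← Recovery.adj_iff_class M' hq' (f x) (f y) ℓ]
    constructor
    · rintro ⟨α, hα⟩
      refine ⟨e 1 ℓ α, ?_⟩
      rw [← htrans x y ℓ α]
      intro h0
      exact hα ((Recovery.e_eq_zero_iff _ _).mp h0)
    · rintro ⟨β, hβ⟩
      refine ⟨(e 1 ℓ).symm β, ?_⟩
      intro h0
      apply hβ
      have hh := htrans x y ℓ ((e 1 ℓ).symm β)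
      rw [h0, (e 1 ℓ).apply_symm_apply, (Recovery.e_eq_zero_iff _ _).mpr rfl] at hh
      exact hh.symm
  have hFadj : ∀ a b : X, M.Adjacent a b →
      M'.Adjacent (f a) (f b) ∧ M'.d (f a) (f b) = M.d a b := by
    intro a b hadj
    have hfin : M.d a b ≠ ∞ := hadj.2.1
    have hco : M.d a b = ((M.d a b).toNNReal : ℝ≥0∞) := (ENNReal.coe_toNNReal hfin).symm
    obtain ⟨h1, h2⟩ := (hAdjIff a b (M.d a b).toNNReal).mp ⟨hadj, hco⟩
    exact ⟨h1, by rw [h2, ← hco]⟩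
  have hGadj : ∀ a b : Y, M'.Adjacent a b →
      M.Adjacent (g a) (g b) ∧ M.d (g a) (g b) = M'.d a b := by
    intro a b hadj
    have hfin : M'.d a b ≠ ∞ := hadj.2.1
    have hco : M'.d a b = ((M'.d a b).toNNReal : ℝ≥0∞) := (ENNReal.coe_toNNReal hfin).symm
    have h' : M'.Adjacent (f (g a)) (f (g b)) ∧
        M'.d (f (g a)) (f (g b)) = ((M'.d a b).toNNReal : ℝ≥0∞) := by
      rw [hfg a, hfg b]
      exact ⟨hadj, hco⟩
    obtain ⟨h1, h2⟩ := (hAdjIff (g a) (g b) (M'.d a b).toNNReal).mpr h'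
    exact ⟨h1, by rw [h2, ← hco]⟩
  refine ⟨f, ⟨Function.LeftInverse.injective hgf, fun y => ⟨g y, hfg y⟩⟩, ?_⟩
  intro a b
  have hle1 : M.d a b ≠ ∞ → M'.d (f a) (f b) ≤ M.d a b :=
    Recovery.dist_le_of_adjpres M M' hq hpos f hFadj a b
  have hle2 : M'.d (f a) (f b) ≠ ∞ → M.d a b ≤ M'.d (f a) (f b) := by
    intro hfin
    have hh := Recovery.dist_le_of_adjpres M' M hq' hpos' g hGadj (f a) (f b) hfin
    rwa [hgf a, hgf b] at hh
  rcases eq_or_ne (M.d a b) ∞ with h | h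
  · rcases eq_or_ne (M'.d (f a) (f b)) ∞ with h' | h'
    · rw [h, h']
    · exfalso
      have h2 := hle2 h'
      rw [h] at h2
      exact h' (top_le_iff.mp h2)
  · have hd' : M'.d (f a) (f b) ≠ ∞ :=
      ((hle1 h).trans_lt (lt_top_iff_ne_top.mpr h)).ne
    exact le_antisymm (hle1 h) (hle2 hd')

end
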